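/- Let A be a complex unital Banach algebra and a ∈ A. The following are equivalent: (i) a is left generalized Drazin invertible; (ii) there exists an idempotent p ∈ A such that ap = pa, a + p is left invertible, and ap is quasi-nilpotent; (iii) a is left quasi-polar, i.e., there exists an idempotent q ∈ A such that aq = qa, q ∈ Aa, and a(1−q) is quasi-nilpotent. Dually, the following are equivalent: (iv) a is right generalized Drazin invertible; (v) there exists an idempotent p ∈ A such that ap = pa, a + p is right invertible, and ap is quasi-nilpotent; (vi) a is right quasi-polar, i.e., there exists an idempotent q ∈ A such that aq = qa, q ∈ aA, and a(1−q) is quasi-nilpotent. -/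

import Mathlib

open Filter Topology

/-- `q` is quasi-nilpotent: `‖qⁿ‖^{1/n} → 0`. -/
def IsQuasinilpotentElem {A : Type*} [NormedRing A] (q : A) : Prop :=
  Tendsto (fun n : ℕ => ‖q ^ n‖ ^ ((1 : ℝ) / n)) atTop (𝓝 0)

/-- `a` is left generalized Drazin invertible. -/
def IsLeftGDInvertible {A : Type*} [NormedRing A] (a : A) : Prop :=
  ∃ x : A, a * x * a = x * a ^ 2 ∧ x ^ 2 * a = x ∧ IsQuasinilpotentElem (a - a * x * a)

/-- `a` is right generalized Drazin invertible. -/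
def IsRightGDInvertible {A : Type*} [NormedRing A] (a : A) : Prop :=
  ∃ y : A, a * y * a = a ^ 2 * y ∧ a * y ^ 2 = y ∧ IsQuasinilpotentElem (a - a * y * a)

/-- If `w` is quasi-nilpotent then `1 + w` is a unit. -/
lemma aux_isUnit_one_add_of_qnil {A : Type*} [NormedRing A] [NormedAlgebra ℂ A]
    [CompleteSpace A] (w : A) (hw : IsQuasinilpotentElem w) : IsUnit (1 + w) := by
  have hsr : spectralRadius ℂ w = 0 := by
    have h1 := spectrum.pow_norm_pow_one_div_tendsto_nhds_spectralRadius w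
    have h2 : Tendsto (fun n : ℕ => ENNReal.ofReal (‖w ^ n‖ ^ (1 / n : ℝ))) atTop (𝓝 0) := by
      have := (ENNReal.continuous_ofReal.tendsto 0).comp hw
      simpa [Function.comp_def] using this
    exact tendsto_nhds_unique h1 h2
  have hmem : (-1 : ℂ) ∉ spectrum ℂ w := by
    intro hm
    have hle : (‖(-1 : ℂ)‖₊ : ENNReal) ≤ spectralRadius ℂ w := by
      rw [spectralRadius]
      exact le_iSup₂ (f := fun k (_ : k ∈ spectrum ℂ w) => (‖k‖₊ : ENNReal)) _ hm
    simp [hsr] at hle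
  rw [spectrum.notMem_iff] at hmem
  have e : (algebraMap ℂ A) (-1) - w = -(1 + w) := by
    rw [map_neg, map_one]; abel
  rw [e] at hmem
  simpa using hmem.neg

theorem left_right_generalized_drazin_iff {A : Type*} [NormedRing A]
    [NormedAlgebra ℂ A] [CompleteSpace A] (a : A) :
    (IsLeftGDInvertible a ↔
      ∃ p : A, p * p = p ∧ a * p = p * a ∧ (∃ s : A, s * (a + p) = 1) ∧
        IsQuasinilpotentElem (a * p)) ∧
    (IsLeftGDInvertible a ↔
      ∃ q : A, q * q = q ∧ a * q = q * a ∧ (∃ z : A, q = z * a) ∧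
        IsQuasinilpotentElem (a * (1 - q))) ∧
    (IsRightGDInvertible a ↔
      ∃ p : A, p * p = p ∧ a * p = p * a ∧ (∃ s : A, (a + p) * s = 1) ∧
        IsQuasinilpotentElem (a * p)) ∧
    (IsRightGDInvertible a ↔
      ∃ q : A, q * q = q ∧ a * q = q * a ∧ (∃ z : A, q = a * z) ∧
        IsQuasinilpotentElem (a * (1 - q))) := by
  -- Left: (i) → quasi-polar (iii)
  have L1 : IsLeftGDInvertible a →
      ∃ q : A, q * q = q ∧ a * q = q * a ∧ (∃ z : A, q = z * a) ∧
        IsQuasinilpotentElem (a * (1 - q)) := by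
    rintro ⟨x, h1, h2, h3⟩
    refine ⟨x * a, ?_, ?_, ⟨x, rfl⟩, ?_⟩
    · calc (x * a) * (x * a) = x * (a * x * a) := by noncomm_ring
        _ = x * (x * a ^ 2) := by rw [h1]
        _ = (x ^ 2 * a) * a := by noncomm_ring
        _ = x * a := by rw [h2]
    · calc a * (x * a) = a * x * a := by noncomm_ring
        _ = x * a ^ 2 := h1
        _ = (x * a) * a := by noncomm_ring
    · have e : a * (1 - x * a) = a - a * x * a := by noncomm_ring
      rw [e]; exact h3
  -- Left: quasi-polar (iii) → (i)
  have L4 : (∃ q : A, q * q = q ∧ a * q = q * a ∧ (∃ z : A, q = z * a) ∧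
      IsQuasinilpotentElem (a * (1 - q))) → IsLeftGDInvertible a := by
    rintro ⟨q, hq, hc, ⟨z, hz⟩, hqn⟩
    have hxa : (q * z * q) * a = q := by
      calc (q * z * q) * a = q * z * (q * a) := by noncomm_ring
        _ = q * z * (a * q) := by rw [hc]
        _ = q * (z * a) * q := by noncomm_ring
        _ = q * q * q := by rw [← hz]
        _ = q := by rw [hq, hq]
    refine ⟨q * z * q, ?_, ?_, ?_⟩
    · calc a * (q * z * q) * a = a * ((q * z * q) * a) := by noncomm_ring
        _ = a * q := by rw [hxa]
        _ = q * a := hc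
        _ = ((q * z * q) * a) * a := by rw [hxa]
        _ = (q * z * q) * a ^ 2 := by noncomm_ring
    · calc (q * z * q) ^ 2 * a = (q * z * q) * ((q * z * q) * a) := by noncomm_ring
        _ = (q * z * q) * q := by rw [hxa]
        _ = q * z * (q * q) := by noncomm_ring
        _ = q * z * q := by rw [hq]
    · have e : a * (q * z * q) * a = a * q := by rw [mul_assoc, hxa]
      have e2 : a - a * q = a * (1 - q) := by noncomm_ring
      rw [e, e2]; exact hqn
  -- Left: quasi-polar (iii) → (ii)
  have L2 : (∃ q : A, q * q = q ∧ a * q = q * a ∧ (∃ z : A, q = z * a) ∧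
      IsQuasinilpotentElem (a * (1 - q))) →
      ∃ p : A, p * p = p ∧ a * p = p * a ∧ (∃ s : A, s * (a + p) = 1) ∧
        IsQuasinilpotentElem (a * p) := by
    rintro ⟨q, hq, hc, ⟨z, hz⟩, hqn⟩
    obtain ⟨u, hu⟩ := aux_isUnit_one_add_of_qnil (a * (1 - q)) hqn
    have hvu : (↑u⁻¹ : A) * (1 + a * (1 - q)) = 1 := by rw [← hu]; exact u.inv_mul
    have hxa : (q * z * q) * a = q := by
      calc (q * z * q) * a = q * z * (q * a) := by noncomm_ring
        _ = q * z * (a * q) := by rw [hc]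
        _ = q * (z * a) * q := by noncomm_ring
        _ = q * q * q := by rw [← hz]
        _ = q := by rw [hq, hq]
    have hxp : (q * z * q) * (1 - q) = 0 := by
      calc (q * z * q) * (1 - q) = q * z * (q - q * q) := by noncomm_ring
        _ = q * z * (q - q) := by rw [hq]
        _ = 0 := by noncomm_ring
    have hpp : (1 - q) * (1 - q) = 1 - q := by
      calc (1 - q) * (1 - q) = 1 - q - q + q * q := by noncomm_ring
        _ = 1 - q - q + q := by rw [hq]
        _ = 1 - q := by abel
    have hcp : a * (1 - q) = (1 - q) * a := by
      calc a * (1 - q) = a - a * q := by noncomm_ring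
        _ = a - q * a := by rw [hc]
        _ = (1 - q) * a := by noncomm_ring
    refine ⟨1 - q, hpp, hcp, ⟨q * z * q + (↑u⁻¹ : A) * (1 - q), ?_⟩, hqn⟩
    have hpap : (1 - q) * a + (1 - q) * (1 - q) = (1 + a * (1 - q)) * (1 - q) := by
      calc (1 - q) * a + (1 - q) * (1 - q)
          = (1 - q) * a + (1 - q) := by rw [hpp]
        _ = a * (1 - q) + (1 - q) := by rw [hcp]
        _ = (1 + a * (1 - q)) * (1 - q) := by
          have : (1 + a * (1 - q)) * (1 - q) = (1 - q) + a * ((1 - q) * (1 - q)) := by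
            noncomm_ring
          rw [this, hpp]; abel
    calc (q * z * q + (↑u⁻¹ : A) * (1 - q)) * (a + (1 - q))
        = (q * z * q) * a + (q * z * q) * (1 - q)
            + (↑u⁻¹ : A) * ((1 - q) * a + (1 - q) * (1 - q)) := by noncomm_ring
      _ = q + 0 + (↑u⁻¹ : A) * ((1 + a * (1 - q)) * (1 - q)) := by rw [hxa, hxp, hpap]
      _ = q + ((↑u⁻¹ : A) * (1 + a * (1 - q))) * (1 - q) := by noncomm_ring
      _ = q + 1 * (1 - q) := by rw [hvu]
      _ = 1 := by noncomm_ring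
  -- Left: (ii) → quasi-polar (iii)
  have L3 : (∃ p : A, p * p = p ∧ a * p = p * a ∧ (∃ s : A, s * (a + p) = 1) ∧
      IsQuasinilpotentElem (a * p)) →
      ∃ q : A, q * q = q ∧ a * q = q * a ∧ (∃ z : A, q = z * a) ∧
        IsQuasinilpotentElem (a * (1 - q)) := by
    rintro ⟨p, hp, hc, ⟨s, hs⟩, hqn⟩
    have hcq : a * (1 - p) = (1 - p) * a := by
      calc a * (1 - p) = a - a * p := by noncomm_ring
        _ = a - p * a := by rw [hc]
        _ = (1 - p) * a := by noncomm_ring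
    refine ⟨1 - p, ?_, hcq, ⟨s * (1 - p), ?_⟩, ?_⟩
    · calc (1 - p) * (1 - p) = 1 - p - p + p * p := by noncomm_ring
        _ = 1 - p - p + p := by rw [hp]
        _ = 1 - p := by abel
    · have key : s * ((a + p) * (1 - p)) = 1 - p := by
        rw [← mul_assoc, hs, one_mul]
      calc (1 - p) = s * ((a + p) * (1 - p)) := key.symm
        _ = s * (a * (1 - p) + (p - p * p)) := by noncomm_ring
        _ = s * (a * (1 - p) + (p - p)) := by rw [hp]
        _ = s * ((1 - p) * a) := by rw [hcq]; noncomm_ring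
        _ = s * (1 - p) * a := by noncomm_ring
    · have e : a * (1 - (1 - p)) = a * p := by noncomm_ring
      rw [e]; exact hqn
  -- Right: (iv) → quasi-polar (vi)
  have R1 : IsRightGDInvertible a →
      ∃ q : A, q * q = q ∧ a * q = q * a ∧ (∃ z : A, q = a * z) ∧
        IsQuasinilpotentElem (a * (1 - q)) := by
    rintro ⟨y, h1, h2, h3⟩
    refine ⟨a * y, ?_, ?_, ⟨y, rfl⟩, ?_⟩
    · calc (a * y) * (a * y) = (a * y * a) * y := by noncomm_ring
        _ = (a ^ 2 * y) * y := by rw [h1]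
        _ = a * (a * y ^ 2) := by noncomm_ring
        _ = a * y := by rw [h2]
    · calc a * (a * y) = a ^ 2 * y := by noncomm_ring
        _ = a * y * a := h1.symm
        _ = (a * y) * a := by noncomm_ring
    · have e : a * (1 - a * y) = a - a ^ 2 * y := by noncomm_ring
      rw [e, ← h1]; exact h3
  -- Right: quasi-polar (vi) → (iv)
  have R4 : (∃ q : A, q * q = q ∧ a * q = q * a ∧ (∃ z : A, q = a * z) ∧
      IsQuasinilpotentElem (a * (1 - q))) → IsRightGDInvertible a := by
    rintro ⟨q, hq, hc, ⟨z, hz⟩, hqn⟩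
    have hay : a * (q * z * q) = q := by
      calc a * (q * z * q) = (a * q) * z * q := by noncomm_ring
        _ = (q * a) * z * q := by rw [hc]
        _ = q * (a * z) * q := by noncomm_ring
        _ = q * q * q := by rw [← hz]
        _ = q := by rw [hq, hq]
    refine ⟨q * z * q, ?_, ?_, ?_⟩
    · calc a * (q * z * q) * a = q * a := by rw [hay]
        _ = a * q := hc.symm
        _ = a * (a * (q * z * q)) := by rw [hay]
        _ = a ^ 2 * (q * z * q) := by noncomm_ring
    · calc a * (q * z * q) ^ 2 = (a * (q * z * q)) * (q * z * q) := by noncomm_ring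
        _ = q * (q * z * q) := by rw [hay]
        _ = (q * q) * z * q := by noncomm_ring
        _ = q * z * q := by rw [hq]
    · have e : a * (q * z * q) * a = q * a := by rw [hay]
      have e2 : a - q * a = a - a * q := by rw [hc]
      have e3 : a - a * q = a * (1 - q) := by noncomm_ring
      rw [e, e2, e3]; exact hqn
  -- Right: quasi-polar (vi) → (v)
  have R2 : (∃ q : A, q * q = q ∧ a * q = q * a ∧ (∃ z : A, q = a * z) ∧
      IsQuasinilpotentElem (a * (1 - q))) →
      ∃ p : A, p * p = p ∧ a * p = p * a ∧ (∃ s : A, (a + p) * s = 1) ∧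
        IsQuasinilpotentElem (a * p) := by
    rintro ⟨q, hq, hc, ⟨z, hz⟩, hqn⟩
    obtain ⟨u, hu⟩ := aux_isUnit_one_add_of_qnil (a * (1 - q)) hqn
    have huv : (1 + a * (1 - q)) * (↑u⁻¹ : A) = 1 := by rw [← hu]; exact u.mul_inv
    have hay : a * (q * z * q) = q := by
      calc a * (q * z * q) = (a * q) * z * q := by noncomm_ring
        _ = (q * a) * z * q := by rw [hc]
        _ = q * (a * z) * q := by noncomm_ring
        _ = q * q * q := by rw [← hz]
        _ = q := by rw [hq, hq]
    have hpy : (1 - q) * (q * z * q) = 0 := by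
      calc (1 - q) * (q * z * q) = (q - q * q) * z * q := by noncomm_ring
        _ = (q - q) * z * q := by rw [hq]
        _ = 0 := by noncomm_ring
    have hpp : (1 - q) * (1 - q) = 1 - q := by
      calc (1 - q) * (1 - q) = 1 - q - q + q * q := by noncomm_ring
        _ = 1 - q - q + q := by rw [hq]
        _ = 1 - q := by abel
    have hcp : a * (1 - q) = (1 - q) * a := by
      calc a * (1 - q) = a - a * q := by noncomm_ring
        _ = a - q * a := by rw [hc]
        _ = (1 - q) * a := by noncomm_ring
    refine ⟨1 - q, hpp, hcp, ⟨q * z * q + (1 - q) * (↑u⁻¹ : A), ?_⟩, hqn⟩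
    have hpu : a * (1 - q) + (1 - q) * (1 - q) = (1 - q) * (1 + a * (1 - q)) := by
      calc a * (1 - q) + (1 - q) * (1 - q)
          = a * (1 - q) + (1 - q) := by rw [hpp]
        _ = (1 - q) * a + (1 - q) := by rw [hcp]
        _ = (1 - q) * (1 + a * (1 - q)) := by
          have h' : (1 - q) * (1 + a * (1 - q)) = (1 - q) + ((1 - q) * a) * (1 - q) := by
            noncomm_ring
          have h'' : ((1 - q) * a) * (1 - q) = a * ((1 - q) * (1 - q)) := by
            rw [← hcp]; noncomm_ring
          rw [h', h'', hpp, ← hcp, hcp]; abel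
    calc (a + (1 - q)) * (q * z * q + (1 - q) * (↑u⁻¹ : A))
        = a * (q * z * q) + (1 - q) * (q * z * q)
            + (a * (1 - q) + (1 - q) * (1 - q)) * (↑u⁻¹ : A) := by noncomm_ring
      _ = q + 0 + ((1 - q) * (1 + a * (1 - q))) * (↑u⁻¹ : A) := by rw [hay, hpy, hpu]
      _ = q + (1 - q) * ((1 + a * (1 - q)) * (↑u⁻¹ : A)) := by noncomm_ring
      _ = q + (1 - q) * 1 := by rw [huv]
      _ = 1 := by noncomm_ring
  -- Right: (v) → quasi-polar (vi)
  have R3 : (∃ p : A, p * p = p ∧ a * p = p * a ∧ (∃ s : A, (a + p) * s = 1) ∧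
      IsQuasinilpotentElem (a * p)) →
      ∃ q : A, q * q = q ∧ a * q = q * a ∧ (∃ z : A, q = a * z) ∧
        IsQuasinilpotentElem (a * (1 - q)) := by
    rintro ⟨p, hp, hc, ⟨s, hs⟩, hqn⟩
    have hcq : a * (1 - p) = (1 - p) * a := by
      calc a * (1 - p) = a - a * p := by noncomm_ring
        _ = a - p * a := by rw [hc]
        _ = (1 - p) * a := by noncomm_ring
    refine ⟨1 - p, ?_, hcq, ⟨(1 - p) * s, ?_⟩, ?_⟩
    · calc (1 - p) * (1 - p) = 1 - p - p + p * p := by noncomm_ring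
        _ = 1 - p - p + p := by rw [hp]
        _ = 1 - p := by abel
    · have key : ((1 - p) * (a + p)) * s = 1 - p := by
        rw [mul_assoc, hs, mul_one]
      calc (1 - p) = ((1 - p) * (a + p)) * s := key.symm
        _ = ((1 - p) * a + (p - p * p)) * s := by noncomm_ring
        _ = ((1 - p) * a + (p - p)) * s := by rw [hp]
        _ = (a * (1 - p)) * s := by rw [hcq]; noncomm_ring
        _ = a * ((1 - p) * s) := by noncomm_ring
    · have e : a * (1 - (1 - p)) = a * p := by noncomm_ring
      rw [e]; exact hqn
  exact ⟨⟨fun h => L2 (L1 h), fun h => L4 (L3 h)⟩,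
    ⟨L1, L4⟩,
    ⟨fun h => R2 (R1 h), fun h => R4 (R3 h)⟩,
    ⟨R1, R4⟩⟩
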